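/- Let S = ℤₚ[[X₁, X₂, X₃, X₄]] and for each j ∈ ℕ let γⱼ = (1+X₃)(1+X₄)ʲ - 1 ∈ S. Then the ideals Sγⱼ are pairwise distinct prime ideals, and consequently ∩ⱼ Sγⱼ = 0. -/

import Mathlib

open MvPowerSeries Finsupp

namespace Stmt18

/-! ### Splitting off one variable of a multivariate power series ring -/

section Split

variable {R : Type*} [CommRing R] {σ τ υ : Type*}

/-- The underlying function of the splitting ring equivalence. -/
noncomputable def splitFun (D : (σ →₀ ℕ) ≃+ (υ →₀ ℕ) × (τ →₀ ℕ))
    (f : MvPowerSeries σ R) : MvPowerSeries υ (MvPowerSeries τ R) :=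
  fun u d => f (D.symm (u, d))

lemma coeff_splitFun (D : (σ →₀ ℕ) ≃+ (υ →₀ ℕ) × (τ →₀ ℕ))
    (f : MvPowerSeries σ R) (u : υ →₀ ℕ) (d : τ →₀ ℕ) :
    coeff (R := R) d (coeff (R := (MvPowerSeries τ R)) u (splitFun D f)) = coeff (R := R) (D.symm (u, d)) f := rfl

lemma splitFun_mul (D : (σ →₀ ℕ) ≃+ (υ →₀ ℕ) × (τ →₀ ℕ)) (f g : MvPowerSeries σ R) :
    splitFun D (f * g) = splitFun D f * splitFun D g := by
  classical
  funext u d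
  have lhs : splitFun D (f * g) u d =
      ∑ c ∈ Finset.HasAntidiagonal.antidiagonal (D.symm (u, d)), f c.1 * g c.2 := by
    show coeff (R := R) (D.symm (u, d)) (f * g) = _
    rw [coeff_mul]
    rfl
  have rhs : (splitFun D f * splitFun D g) u d =
      ∑ x ∈ Finset.HasAntidiagonal.antidiagonal u ×ˢ Finset.HasAntidiagonal.antidiagonal d,
        f (D.symm (x.1.1, x.2.1)) * g (D.symm (x.1.2, x.2.2)) := by
    show coeff (R := R) d (coeff (R := (MvPowerSeries τ R)) u (splitFun D f * splitFun D g)) = _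
    rw [coeff_mul, map_sum]
    rw [Finset.sum_product]
    refine Finset.sum_congr rfl fun a _ => ?_
    rw [coeff_mul]
    refine Finset.sum_congr rfl fun p _ => rfl
  rw [lhs, rhs]
  refine Finset.sum_nbij' (fun c => (((D c.1).1, (D c.2).1), ((D c.1).2, (D c.2).2)))
    (fun x => (D.symm (x.1.1, x.2.1), D.symm (x.1.2, x.2.2))) ?_ ?_ ?_ ?_ ?_
  · intro c hc
    rw [Finset.HasAntidiagonal.mem_antidiagonal] at hc
    have : D c.1 + D c.2 = (u, d) := by
      rw [← map_add, hc, AddEquiv.apply_symm_apply]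
    rw [Finset.mem_product, Finset.HasAntidiagonal.mem_antidiagonal, Finset.HasAntidiagonal.mem_antidiagonal]
    exact ⟨congrArg Prod.fst this, congrArg Prod.snd this⟩
  · intro x hx
    rw [Finset.mem_product, Finset.HasAntidiagonal.mem_antidiagonal, Finset.HasAntidiagonal.mem_antidiagonal] at hx
    rw [Finset.HasAntidiagonal.mem_antidiagonal, ← map_add]
    congr 1
    exact Prod.ext_iff.mpr ⟨hx.1, hx.2⟩
  · intro c _
    simp
  · intro x _
    simp
  · intro c _
    simp

/-- The ring equivalence splitting a multivariate power series ring according to a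
decomposition of the exponent monoid. -/
noncomputable def split (D : (σ →₀ ℕ) ≃+ (υ →₀ ℕ) × (τ →₀ ℕ)) :
    MvPowerSeries σ R ≃+* MvPowerSeries υ (MvPowerSeries τ R) where
  toFun := splitFun D
  invFun := fun F c => F (D c).1 (D c).2
  left_inv f := by funext c; simp [splitFun]
  right_inv F := by funext u d; simp [splitFun]
  map_add' f g := rfl
  map_mul' := splitFun_mul D

lemma split_monomial (D : (σ →₀ ℕ) ≃+ (υ →₀ ℕ) × (τ →₀ ℕ)) (c : σ →₀ ℕ) (r : R) :
    split D (monomial (R := R) c r) =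
      monomial (R := (MvPowerSeries τ R)) (D c).1 (monomial (R := R) (D c).2 r) := by
  classical
  funext u d
  show coeff (R := R) (D.symm (u, d)) (monomial (R := R) c r) = coeff (R := R) d
    (coeff (R := (MvPowerSeries τ R)) u (monomial (R := (MvPowerSeries τ R)) (D c).1 (monomial (R := R) (D c).2 r)))
  rw [coeff_monomial, coeff_monomial]
  have hiff : D.symm (u, d) = c ↔ (u = (D c).1 ∧ d = (D c).2) := by
    rw [AddEquiv.symm_apply_eq, Prod.ext_iff]
  by_cases hu : u = (D c).1
  · rw [if_pos hu, coeff_monomial]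
    by_cases hd : d = (D c).2
    · rw [if_pos hd, if_pos (hiff.mpr ⟨hu, hd⟩)]
    · rw [if_neg hd, if_neg fun hc => hd (hiff.mp hc).2]
  · rw [if_neg hu, map_zero, if_neg fun hc => hu (hiff.mp hc).1]

end Split

/-! ### Evaluation of a power series over `MvPowerSeries` at a constant-term-zero element -/

section Phi

variable {R : Type*} [CommRing R] {τ : Type*}

/-- Evaluation of `f : A⟦X⟧`, `A = MvPowerSeries τ R`, at `X = h`. -/
noncomputable def phi (h : MvPowerSeries τ R) (f : PowerSeries (MvPowerSeries τ R)) :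
    MvPowerSeries τ R :=
  fun d => ∑ n ∈ Finset.range (d.degree + 1),
    coeff (R := R) d (PowerSeries.coeff (R := (MvPowerSeries τ R)) n f * h ^ n)

variable {h : MvPowerSeries τ R}

lemma degree_add' (a b : τ →₀ ℕ) : (a + b).degree = a.degree + b.degree := by
  have := Finsupp.degree_eq_weight_one (σ := τ) (R := ℕ)
  simp only [this, map_add]

lemma coeff_pow_eq_zero (hh : constantCoeff (σ := τ) (R := R) h = 0) {d : τ →₀ ℕ} {n : ℕ} (hd : d.degree < n) :
    coeff (R := R) d (h ^ n) = 0 := by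
  classical
  induction n generalizing d with
  | zero => omega
  | succ n ih =>
    rw [pow_succ, mul_comm, coeff_mul]
    refine Finset.sum_eq_zero fun p hp => ?_
    rw [Finset.HasAntidiagonal.mem_antidiagonal] at hp
    rcases eq_or_ne p.1 0 with h1 | h1
    · rw [h1, coeff_zero_eq_constantCoeff, hh, zero_mul]
    · have h2 : p.1.degree + p.2.degree = d.degree := by rw [← degree_add', hp]
      have h3 : p.1.degree ≠ 0 := fun hc => h1 ((Finsupp.degree_eq_zero_iff _).mp hc)
      rw [ih (by omega), mul_zero]

lemma coeff_mul_pow_eq_zero (hh : constantCoeff (σ := τ) (R := R) h = 0) {a : MvPowerSeries τ R} {d : τ →₀ ℕ} {n : ℕ}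
    (hd : d.degree < n) : coeff (R := R) d (a * h ^ n) = 0 := by
  classical
  rw [coeff_mul]
  refine Finset.sum_eq_zero fun p hp => ?_
  rw [Finset.HasAntidiagonal.mem_antidiagonal] at hp
  have h2 : p.1.degree + p.2.degree = d.degree := by rw [← degree_add', hp]
  rw [coeff_pow_eq_zero hh (by omega), mul_zero]

lemma coeff_phi (hh : constantCoeff (σ := τ) (R := R) h = 0) (f : PowerSeries (MvPowerSeries τ R)) (d : τ →₀ ℕ) {N : ℕ}
    (hN : d.degree ≤ N) :
    coeff (R := R) d (phi h f) = ∑ n ∈ Finset.range (N + 1),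
      coeff (R := R) d (PowerSeries.coeff (R := (MvPowerSeries τ R)) n f * h ^ n) := by
  show (∑ n ∈ Finset.range (d.degree + 1), _) = _
  refine Finset.sum_subset ?_ fun n _ hn => ?_
  · exact Finset.range_subset_range.mpr (by omega)
  · rw [Finset.mem_range, not_lt] at hn
    exact coeff_mul_pow_eq_zero hh (by omega)

lemma phi_mul (hh : constantCoeff (σ := τ) (R := R) h = 0) (f g : PowerSeries (MvPowerSeries τ R)) :
    phi h (f * g) = phi h f * phi h g := by
  classical
  funext d
  have hN : d.degree = d.degree := rfl
  set T : ℕ × ℕ → R := fun q => coeff (R := R) d (PowerSeries.coeff (R := (MvPowerSeries τ R)) q.1 f *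
      PowerSeries.coeff (R := (MvPowerSeries τ R)) q.2 g * h ^ (q.1 + q.2)) with hT
  have hTzero : ∀ q : ℕ × ℕ, d.degree < q.1 + q.2 → T q = 0 := by
    intro q hq
    rw [hT]
    exact coeff_mul_pow_eq_zero hh hq
  have hdisj : (↑(Finset.range (2 * d.degree + 1)) : Set ℕ).PairwiseDisjoint
      Finset.HasAntidiagonal.antidiagonal := by
    intro m _ n _ hmn
    refine Finset.disjoint_left.mpr fun q hqm hqn => hmn ?_
    rw [Finset.HasAntidiagonal.mem_antidiagonal] at hqm hqn
    omega
  have lhs_eq : phi h (f * g) d =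
      ∑ q ∈ (Finset.range (2 * d.degree + 1)).biUnion Finset.HasAntidiagonal.antidiagonal, T q := by
    have step1 : phi h (f * g) d = ∑ n ∈ Finset.range (2 * d.degree + 1),
        coeff (R := R) d (PowerSeries.coeff (R := (MvPowerSeries τ R)) n (f * g) * h ^ n) :=
      coeff_phi hh (f * g) d (by omega)
    have step2 : ∀ n ∈ Finset.range (2 * d.degree + 1),
        coeff (R := R) d (PowerSeries.coeff (R := (MvPowerSeries τ R)) n (f * g) * h ^ n) =
        ∑ q ∈ Finset.HasAntidiagonal.antidiagonal n, T q := by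
      intro n _
      rw [PowerSeries.coeff_mul, Finset.sum_mul, map_sum]
      refine Finset.sum_congr rfl fun q hq => ?_
      rw [Finset.HasAntidiagonal.mem_antidiagonal] at hq
      simp only [hT, hq]
    rw [step1, Finset.sum_congr rfl step2, ← Finset.sum_biUnion hdisj]
  have rhs_eq : (phi h f * phi h g) d =
      ∑ q ∈ Finset.range (d.degree + 1) ×ˢ Finset.range (d.degree + 1), T q := by
    have : (phi h f * phi h g) d = coeff (R := R) d (phi h f * phi h g) := rfl
    rw [this, coeff_mul]
    have step : ∀ e ∈ Finset.HasAntidiagonal.antidiagonal d,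
        coeff (R := R) e.1 (phi h f) * coeff (R := R) e.2 (phi h g) =
        ∑ q ∈ Finset.range (d.degree + 1) ×ˢ Finset.range (d.degree + 1),
          coeff (R := R) e.1 (PowerSeries.coeff (R := (MvPowerSeries τ R)) q.1 f * h ^ q.1) *
          coeff (R := R) e.2 (PowerSeries.coeff (R := (MvPowerSeries τ R)) q.2 g * h ^ q.2) := by
      intro e he
      rw [Finset.HasAntidiagonal.mem_antidiagonal] at he
      have h1 : e.1.degree ≤ d.degree := by
        have := degree_add' e.1 e.2
        rw [he] at this
        omega
      have h2 : e.2.degree ≤ d.degree := by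
        have := degree_add' e.1 e.2
        rw [he] at this
        omega
      rw [coeff_phi hh f e.1 h1, coeff_phi hh g e.2 h2, Finset.sum_mul_sum]
      rw [← Finset.sum_product']
    rw [Finset.sum_congr rfl step, Finset.sum_comm]
    refine Finset.sum_congr rfl fun q _ => ?_
    rw [hT, ← coeff_mul]
    congr 1
    ring
  rw [lhs_eq, rhs_eq]
  refine (Finset.sum_subset ?_ fun q _ hq => ?_).symm
  · intro q hq
    rw [Finset.mem_product, Finset.mem_range, Finset.mem_range] at hq
    rw [Finset.mem_biUnion]
    exact ⟨q.1 + q.2, Finset.mem_range.mpr (by omega), Finset.HasAntidiagonal.mem_antidiagonal.mpr rfl⟩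
  · rw [Finset.mem_product, Finset.mem_range, Finset.mem_range, not_and_or, not_lt, not_lt] at hq
    exact hTzero q (by omega)

lemma phi_C (a : MvPowerSeries τ R) : phi h (PowerSeries.C a) = a := by
  classical
  funext d
  show (∑ n ∈ Finset.range (d.degree + 1),
      coeff (R := R) d (PowerSeries.coeff (R := (MvPowerSeries τ R)) n (PowerSeries.C a) * h ^ n)) = a d
  rw [Finset.sum_eq_single 0]
  · rw [PowerSeries.coeff_zero_C, pow_zero, mul_one]; rfl
  · intro n _ hn
    rw [PowerSeries.coeff_C, if_neg hn, zero_mul, map_zero]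
  · intro hc
    exact absurd (Finset.mem_range.mpr (by omega)) hc

/-- `phi` as a ring homomorphism. -/
noncomputable def phiHom (hh : constantCoeff (σ := τ) (R := R) h = 0) : PowerSeries (MvPowerSeries τ R) →+* MvPowerSeries τ R where
  toFun := phi h
  map_one' := by simpa using phi_C (h := h) 1
  map_mul' := phi_mul hh
  map_zero' := by simpa using phi_C (h := h) 0
  map_add' f g := by
    funext d
    show _ = phi h f d + phi h g d
    simp [phi, map_add, add_mul, Finset.sum_add_distrib]

/-- shift of a power series by `m` -/
noncomputable def shiftN (m : ℕ) (f : PowerSeries (MvPowerSeries τ R)) :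
    PowerSeries (MvPowerSeries τ R) :=
  PowerSeries.mk fun k => PowerSeries.coeff (k + m) f

lemma phi_shift1 (hh : constantCoeff (σ := τ) (R := R) h = 0) (f : PowerSeries (MvPowerSeries τ R)) :
    phi h f = PowerSeries.coeff 0 f + h * phi h (shiftN 1 f) := by
  classical
  funext d
  have hq : ∀ e : (τ →₀ ℕ) × (τ →₀ ℕ), e ∈ Finset.HasAntidiagonal.antidiagonal d →
      coeff (R := R) e.1 h * coeff (R := R) e.2 (phi h (shiftN 1 f)) =
      ∑ k ∈ Finset.range (d.degree + 1),
        coeff (R := R) e.1 h * coeff (R := R) e.2 (PowerSeries.coeff (R := (MvPowerSeries τ R)) (k + 1) f * h ^ k) := by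
    intro e he
    rw [Finset.HasAntidiagonal.mem_antidiagonal] at he
    have h2 : e.2.degree ≤ d.degree := by
      have := degree_add' e.1 e.2
      rw [he] at this
      omega
    rw [coeff_phi hh _ _ h2, Finset.mul_sum]
    refine Finset.sum_congr rfl fun k _ => ?_
    rw [shiftN, PowerSeries.coeff_mk]
  have hmul : coeff (R := R) d (h * phi h (shiftN 1 f)) = ∑ k ∈ Finset.range (d.degree + 1),
      coeff (R := R) d (PowerSeries.coeff (R := (MvPowerSeries τ R)) (k + 1) f * h ^ (k + 1)) := by
    rw [coeff_mul, Finset.sum_congr rfl hq, Finset.sum_comm]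
    refine Finset.sum_congr rfl fun k _ => ?_
    rw [← coeff_mul]
    congr 1
    ring
  show (∑ n ∈ Finset.range (d.degree + 1),
      coeff (R := R) d (PowerSeries.coeff (R := (MvPowerSeries τ R)) n f * h ^ n)) =
      (PowerSeries.coeff (R := (MvPowerSeries τ R)) 0 f + h * phi h (shiftN 1 f)) d
  have hsplit : ((PowerSeries.coeff (R := (MvPowerSeries τ R)) 0 f + h * phi h (shiftN 1 f)) d)
      = coeff (R := R) d (PowerSeries.coeff (R := (MvPowerSeries τ R)) 0 f) +
        coeff (R := R) d (h * phi h (shiftN 1 f)) := rfl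
  have hvanish : coeff (R := R) d (PowerSeries.coeff (R := (MvPowerSeries τ R)) (d.degree + 1) f *
      h ^ (d.degree + 1)) = 0 := coeff_mul_pow_eq_zero hh (Nat.lt_succ_self _)
  rw [hsplit, hmul, Finset.sum_range_succ
      (fun k => coeff (R := R) d (PowerSeries.coeff (R := (MvPowerSeries τ R)) (k + 1) f * h ^ (k + 1))),
    Finset.sum_range_succ'
      (fun n => coeff (R := R) d (PowerSeries.coeff (R := (MvPowerSeries τ R)) n f * h ^ n))]
  simp only [hvanish, add_zero, pow_zero, mul_one]
  rw [add_comm]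

lemma phi_one : phi h (1 : PowerSeries (MvPowerSeries τ R)) = 1 := by
  simpa using phi_C (h := h) 1

lemma phi_X (hh : constantCoeff (σ := τ) (R := R) h = 0) : phi h (PowerSeries.X) = h := by
  have hs : shiftN 1 (PowerSeries.X : PowerSeries (MvPowerSeries τ R)) = 1 := by
    ext k
    rw [shiftN, PowerSeries.coeff_mk, PowerSeries.coeff_X, PowerSeries.coeff_one]
    simp [Nat.add_eq_zero]
  rw [phi_shift1 hh PowerSeries.X, hs, phi_one, mul_one]
  simp

lemma key_division (hh : constantCoeff (σ := τ) (R := R) h = 0) (f : PowerSeries (MvPowerSeries τ R)) :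
    f = PowerSeries.C (phi h f) +
      (PowerSeries.X - PowerSeries.C h) *
        PowerSeries.mk (fun n => phi h (shiftN (n + 1) f)) := by
  have hshift : ∀ m : ℕ, shiftN 1 (shiftN (m + 1) f) = shiftN (m + 2) f := by
    intro m
    ext k
    rw [shiftN, shiftN, shiftN, PowerSeries.coeff_mk, PowerSeries.coeff_mk, PowerSeries.coeff_mk]
    have : k + 1 + (m + 1) = k + (m + 2) := by omega
    rw [this]
  ext n
  rw [map_add, sub_mul, map_sub, PowerSeries.coeff_C]
  cases n with
  | zero =>
    rw [PowerSeries.coeff_zero_X_mul, PowerSeries.coeff_C_mul, PowerSeries.coeff_mk,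
      phi_shift1 hh f]
    simp
  | succ n =>
    rw [PowerSeries.coeff_succ_X_mul, PowerSeries.coeff_C_mul, PowerSeries.coeff_mk,
      PowerSeries.coeff_mk, if_neg (Nat.succ_ne_zero n), phi_shift1 hh (shiftN (n + 1) f),
      hshift n]
    have h0 : PowerSeries.coeff (R := (MvPowerSeries τ R)) 0 (shiftN (n + 1) f) =
        PowerSeries.coeff (R := (MvPowerSeries τ R)) (n + 1) f := by
      rw [shiftN, PowerSeries.coeff_mk, zero_add]
    rw [h0]
    ring

lemma ker_phiHom (hh : constantCoeff (σ := τ) (R := R) h = 0) : RingHom.ker (phiHom hh) =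
    Ideal.span {PowerSeries.X - PowerSeries.C h} := by
  apply le_antisymm
  · intro f hf
    rw [RingHom.mem_ker] at hf
    have hkey := key_division hh f
    have hf' : phi h f = 0 := hf
    rw [hf', map_zero, zero_add] at hkey
    rw [Ideal.mem_span_singleton]
    exact ⟨_, hkey⟩
  · rw [Ideal.span_le, Set.singleton_subset_iff, SetLike.mem_coe, RingHom.mem_ker, map_sub]
    have h1 : phiHom hh PowerSeries.X = h := phi_X hh
    have h2 : phiHom hh (PowerSeries.C h) = h := phi_C h
    rw [h1, h2, sub_self]

end Phi

end Stmt18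

namespace Stmt18

/-! ### The concrete setup -/

/-- The equivalence `Fin 4 ≃ Unit ⊕ Fin 3` singling out the variable `X₂`. -/
def e4 : Fin 4 ≃ Unit ⊕ Fin 3 where
  toFun := ![Sum.inr 0, Sum.inr 1, Sum.inl (), Sum.inr 2]
  invFun := Sum.elim (fun _ => 2) ![0, 1, 3]
  left_inv := by decide
  right_inv := by rintro (⟨⟩ | x) <;> first | rfl | (fin_cases x <;> rfl)

/-- The corresponding decomposition of exponents. -/
noncomputable def D4 : (Fin 4 →₀ ℕ) ≃+ (Unit →₀ ℕ) × (Fin 3 →₀ ℕ) :=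
  (Finsupp.domCongr e4).trans Finsupp.sumFinsuppAddEquivProdFinsupp

lemma sum_single_inl {α β : Type*} (a : α) (n : ℕ) :
    (Finsupp.sumFinsuppAddEquivProdFinsupp (Finsupp.single (Sum.inl a) n) :
      (α →₀ ℕ) × (β →₀ ℕ)) = (Finsupp.single a n, 0) := by
  classical
  refine Prod.ext_iff.mpr ⟨?_, ?_⟩
  · ext x
    rw [Finsupp.fst_sumFinsuppAddEquivProdFinsupp]
    simp [Finsupp.single_apply]
  · ext y
    rw [Finsupp.snd_sumFinsuppAddEquivProdFinsupp]
    simp [Finsupp.single_apply]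

lemma sum_single_inr {α β : Type*} (b : β) (n : ℕ) :
    (Finsupp.sumFinsuppAddEquivProdFinsupp (Finsupp.single (Sum.inr b) n) :
      (α →₀ ℕ) × (β →₀ ℕ)) = (0, Finsupp.single b n) := by
  classical
  refine Prod.ext_iff.mpr ⟨?_, ?_⟩
  · ext x
    rw [Finsupp.fst_sumFinsuppAddEquivProdFinsupp]
    simp [Finsupp.single_apply]
  · ext y
    rw [Finsupp.snd_sumFinsuppAddEquivProdFinsupp]
    simp [Finsupp.single_apply]

lemma D4_single_two : D4 (Finsupp.single (2 : Fin 4) 1) = (Finsupp.single () 1, 0) := by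
  show Finsupp.sumFinsuppAddEquivProdFinsupp
    ((Finsupp.domCongr e4) (Finsupp.single (2 : Fin 4) 1)) = _
  rw [Finsupp.domCongr_apply, Finsupp.equivMapDomain_single]
  have h2 : e4 2 = Sum.inl () := rfl
  rw [h2, sum_single_inl]

lemma D4_single_three : D4 (Finsupp.single (3 : Fin 4) 1) = (0, Finsupp.single (2 : Fin 3) 1) := by
  show Finsupp.sumFinsuppAddEquivProdFinsupp
    ((Finsupp.domCongr e4) (Finsupp.single (3 : Fin 4) 1)) = _
  rw [Finsupp.domCongr_apply, Finsupp.equivMapDomain_single]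
  have h3 : e4 3 = Sum.inr 2 := rfl
  rw [h3, sum_single_inr]

lemma coeff_single_one_pow {R : Type*} [CommRing R] {σ : Type*} (s : σ) (m : ℕ) :
    coeff (R := R) (Finsupp.single s 1) ((1 + X s) ^ m) = (m : R) := by
  classical
  have hsne : Finsupp.single s 1 ≠ 0 := fun hc =>
    one_ne_zero (α := ℕ) (Finsupp.single_eq_zero.mp hc)
  induction m with
  | zero =>
    rw [pow_zero, coeff_one, if_neg hsne, Nat.cast_zero]
  | succ m ih =>
    have hcc : constantCoeff (σ := σ) (R := R) ((1 + X s) ^ m) = 1 := by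
      rw [map_pow, map_add, map_one, constantCoeff_X, add_zero, one_pow]
    have hX : (X s : MvPowerSeries σ R) = monomial (R := R) (Finsupp.single s 1) 1 := X_def s
    rw [pow_succ, mul_add, mul_one, map_add, ih, hX, coeff_mul_monomial, if_pos le_rfl,
      tsub_self, mul_one, coeff_zero_eq_constantCoeff, ← hX, hcc, Nat.cast_succ]

end Stmt18

/-- In `S = ℤₚ[[X₁,X₂,X₃,X₄]]`, the elements `γⱼ = (1+X₃)(1+X₄)ʲ - 1`
generate pairwise distinct prime ideals, and consequently `⋂ⱼ Sγⱼ = 0`. -/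
theorem stmt18 (p : ℕ) [Fact p.Prime]
    (γ : ℕ → MvPowerSeries (Fin 4) ℤ_[p])
    (hγ : ∀ j, γ j = (1 + MvPowerSeries.X 2) * (1 + MvPowerSeries.X 3) ^ j - 1) :
    (∀ j, (Ideal.span {γ j}).IsPrime) ∧
    (∀ i j, i ≠ j → Ideal.span {γ i} ≠ Ideal.span {γ j}) ∧
    (⨅ j, Ideal.span {γ j}) = ⊥ := by
  classical
  haveI : IsDomain (MvPowerSeries (Fin 3) ℤ_[p]) := NoZeroDivisors.to_isDomain _
  haveI : IsDomain (MvPowerSeries (Fin 4) ℤ_[p]) := NoZeroDivisors.to_isDomain _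
  set A := MvPowerSeries (Fin 3) ℤ_[p] with hA
  let Φ : MvPowerSeries (Fin 4) ℤ_[p] ≃+* PowerSeries A := Stmt18.split Stmt18.D4
  have hX2 : Φ (MvPowerSeries.X 2) = PowerSeries.X := by
    show Stmt18.split Stmt18.D4 (MvPowerSeries.X 2) = _
    rw [MvPowerSeries.X_def, Stmt18.split_monomial, Stmt18.D4_single_two]
    show MvPowerSeries.monomial (R := A) (Finsupp.single () 1) (MvPowerSeries.monomial (R := ℤ_[p]) 0 1) = _
    rw [MvPowerSeries.monomial_zero_one]
    show _ = MvPowerSeries.X ()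
    rw [MvPowerSeries.X_def]
  have hX3 : Φ (MvPowerSeries.X 3) = PowerSeries.C (R := A) (MvPowerSeries.X 2) := by
    show Stmt18.split Stmt18.D4 (MvPowerSeries.X 3) = _
    rw [MvPowerSeries.X_def, Stmt18.split_monomial, Stmt18.D4_single_three]
    show MvPowerSeries.monomial (R := A) (0 : Unit →₀ ℕ)
      (MvPowerSeries.monomial (R := ℤ_[p]) (Finsupp.single 2 1) 1) = _
    rw [MvPowerSeries.monomial_zero_eq_C_apply, ← MvPowerSeries.X_def]
    rfl
  set y : A := MvPowerSeries.X 2 with hy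
  set w : A := MvPowerSeries.invOfUnit (1 + y) 1 with hwdef
  have hw : (1 + y) * w = 1 := MvPowerSeries.mul_invOfUnit (1 + y) 1 (by
    rw [map_add, map_one, hy, MvPowerSeries.constantCoeff_X, add_zero, Units.val_one])
  have hccw : MvPowerSeries.constantCoeff (R := ℤ_[p]) w = 1 := by
    have hc := congrArg (MvPowerSeries.constantCoeff (R := ℤ_[p])) hw
    rwa [map_mul, map_one, map_add, map_one, hy, MvPowerSeries.constantCoeff_X, add_zero,
      one_mul] at hc
  have hcch : ∀ j : ℕ, MvPowerSeries.constantCoeff (R := ℤ_[p]) (w ^ j - 1) = 0 := by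
    intro j
    rw [map_sub, map_pow, hccw, one_pow, map_one, sub_self]
  have huw : ∀ j : ℕ, (1 + y) ^ j * w ^ j = 1 := by
    intro j
    rw [← mul_pow, hw, one_pow]
  have hfact : ∀ j, Φ (γ j) =
      PowerSeries.C (R := A) ((1 + y) ^ j) *
        (PowerSeries.X - PowerSeries.C (R := A) (w ^ j - 1)) := by
    intro j
    rw [hγ j, map_sub, map_mul, map_add, map_one, map_pow, map_add, map_one, hX2, hX3]
    have hCu : (1 + PowerSeries.C (R := A) y) ^ j = PowerSeries.C (R := A) ((1 + y) ^ j) := by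
      rw [map_pow, map_add, map_one]
    have hCuw : PowerSeries.C (R := A) ((1 + y) ^ j) * PowerSeries.C (R := A) (w ^ j) = 1 := by
      rw [← map_mul, huw j, map_one]
    have hCh : PowerSeries.C (R := A) (w ^ j - 1) = PowerSeries.C (R := A) (w ^ j) - 1 := by
      rw [map_sub, map_one]
    rw [hCu, hCh]
    linear_combination hCuw
  have hunit : ∀ j : ℕ, IsUnit (PowerSeries.C (R := A) ((1 + y) ^ j)) := fun j =>
    (IsUnit.of_mul_eq_one _ (huw j)).map (PowerSeries.C (R := A))
  have hspan : ∀ j, Ideal.span {Φ (γ j)} = RingHom.ker (Stmt18.phiHom (hcch j)) := by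
    intro j
    rw [hfact j, Ideal.span_singleton_mul_left_unit (hunit j), ← Stmt18.ker_phiHom (hcch j)]
  have hker : ∀ j x, x ∈ Ideal.span {γ j} ↔
      Stmt18.phiHom (hcch j) (Φ x) = 0 := by
    intro j x
    rw [Ideal.mem_span_singleton, ← map_dvd_iff Φ, ← Ideal.mem_span_singleton, hspan j,
      RingHom.mem_ker]
  have hprime : ∀ j, (Ideal.span {γ j}).IsPrime := by
    intro j
    have heq : Ideal.span {γ j} =
        RingHom.ker ((Stmt18.phiHom (hcch j)).comp Φ.toRingHom) :=
      Ideal.ext fun x => by rw [RingHom.mem_ker]; exact hker j x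
    rw [heq]
    exact RingHom.ker_isPrime _
  have hne0 : ∀ j, γ j ≠ 0 := by
    intro j hc
    have h0 : Φ (γ j) = 0 := by rw [hc, map_zero]
    rw [hfact j] at h0
    rcases mul_eq_zero.mp h0 with h1 | h1
    · exact (hunit j).ne_zero h1
    · have hc1 := congrArg (PowerSeries.coeff (R := A) 1) h1
      rw [map_sub, PowerSeries.coeff_one_X, PowerSeries.coeff_C, if_neg one_ne_zero,
        sub_zero, map_zero] at hc1
      exact one_ne_zero hc1
  have hwpow : ∀ i j, Ideal.span {γ i} = Ideal.span {γ j} → w ^ i = w ^ j := by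
    intro i j heq
    have hmem : γ i ∈ Ideal.span {γ j} := heq ▸ Ideal.mem_span_singleton_self (γ i)
    have h2 := (hker j (γ i)).mp hmem
    rw [hfact i, map_mul, map_sub] at h2
    have hXv : Stmt18.phiHom (hcch j) PowerSeries.X = w ^ j - 1 := Stmt18.phi_X (hcch j)
    have hC1 : Stmt18.phiHom (hcch j) (PowerSeries.C (R := A) ((1 + y) ^ i)) = (1 + y) ^ i :=
      Stmt18.phi_C _
    have hC2 : Stmt18.phiHom (hcch j) (PowerSeries.C (R := A) (w ^ i - 1)) = w ^ i - 1 :=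
      Stmt18.phi_C _
    rw [hXv, hC1, hC2] at h2
    rcases mul_eq_zero.mp h2 with h3 | h3
    · exact absurd h3 (IsUnit.of_mul_eq_one _ (huw i)).ne_zero
    · have h4 : w ^ j - 1 = w ^ i - 1 := sub_eq_zero.mp h3
      rw [sub_left_inj] at h4
      exact h4.symm
  have hinj : ∀ i j, i ≠ j → Ideal.span {γ i} ≠ Ideal.span {γ j} := by
    intro i j hij heq
    have hw' := hwpow i j heq
    have key : ∀ a b : ℕ, a < b → w ^ a = w ^ b → False := by
      intro a b hab hwab
      have hpow : (1 + y) ^ (b - a) = 1 := by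
        have h1 : (1 + y) ^ b * w ^ a = (1 + y) ^ b * w ^ b := by rw [hwab]
        have h3 : (1 + y) ^ b * w ^ a = (1 + y) ^ (b - a) := by
          have hb : b = (b - a) + a := by omega
          rw [hb, pow_add, mul_assoc, huw a, mul_one, Nat.add_sub_cancel]
        rw [h3, huw b] at h1
        exact h1
      have hcoeff := congrArg (coeff (R := ℤ_[p]) (Finsupp.single (2 : Fin 3) 1)) hpow
      rw [hy, Stmt18.coeff_single_one_pow, coeff_one,
        if_neg (fun hc : Finsupp.single (2 : Fin 3) 1 = 0 =>
          one_ne_zero (α := ℕ) (Finsupp.single_eq_zero.mp hc))] at hcoeff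
      have hba : ((b - a : ℕ) : ℤ_[p]) = 0 := hcoeff
      rw [Nat.cast_eq_zero] at hba
      omega
    rcases Nat.lt_or_ge i j with hlt | hge
    · exact key i j hlt hw'
    · exact key j i (by omega) hw'.symm
  refine ⟨hprime, hinj, ?_⟩
  rw [eq_bot_iff]
  intro f hf
  rw [Ideal.mem_iInf] at hf
  rw [Ideal.mem_bot]
  by_contra hf0
  have hdvd : ∀ j, γ j ∣ f := fun j => Ideal.mem_span_singleton.mp (hf j)
  have hprimes : ∀ j, Prime (γ j) := fun j =>
    (Ideal.span_singleton_prime (hne0 j)).mp (hprime j)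
  have hnd : ∀ i j : ℕ, i ≠ j → ¬ γ i ∣ γ j := by
    intro i j hij hd
    exact hinj i j hij (Ideal.span_singleton_eq_span_singleton.mpr
      (((hprimes i).dvd_prime_iff_associated (hprimes j)).mp hd))
  have hproddvd : ∀ n, (∏ j ∈ Finset.range n, γ j) ∣ f := by
    intro n
    induction n with
    | zero => simpa using one_dvd f
    | succ n ih =>
      obtain ⟨g, hg⟩ := ih
      have h1 : γ n ∣ (∏ j ∈ Finset.range n, γ j) * g := hg ▸ hdvd n
      rcases (hprimes n).dvd_mul.mp h1 with h2 | h2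
      · obtain ⟨k, hk, h3⟩ := ((hprimes n).dvd_finset_prod_iff _).mp h2
        rw [Finset.mem_range] at hk
        exact absurd h3 (hnd n k (by omega))
      · obtain ⟨g', hg'⟩ := h2
        exact ⟨g', by rw [Finset.prod_range_succ, mul_assoc, ← hg', hg]⟩
  have hord1 : ∀ j, 1 ≤ MvPowerSeries.order (γ j) := by
    intro j
    have hco : ∀ d : Fin 4 →₀ ℕ, d.degree < 1 → coeff (R := ℤ_[p]) d (γ j) = 0 := by
      intro d hd
      have hd0 : d = 0 := by
        rw [Nat.lt_one_iff] at hd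
        exact (Finsupp.degree_eq_zero_iff d).mp hd
      rw [hd0, coeff_zero_eq_constantCoeff, hγ j]
      simp [map_pow, MvPowerSeries.constantCoeff_X]
    exact_mod_cast MvPowerSeries.nat_le_order hco
  have hordprod : ∀ n : ℕ, (n : ℕ∞) ≤ MvPowerSeries.order (∏ j ∈ Finset.range n, γ j) := by
    intro n
    induction n with
    | zero => simp
    | succ n ih =>
      rw [Finset.prod_range_succ]
      calc ((n + 1 : ℕ) : ℕ∞) = (n : ℕ∞) + 1 := by push_cast; ring
        _ ≤ MvPowerSeries.order (∏ j ∈ Finset.range n, γ j) + MvPowerSeries.order (γ n) :=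
            add_le_add ih (hord1 n)
        _ ≤ _ := MvPowerSeries.le_order_mul
  have hordf : ∀ n : ℕ, (n : ℕ∞) ≤ MvPowerSeries.order f := by
    intro n
    obtain ⟨g, hg⟩ := hproddvd n
    calc (n : ℕ∞) ≤ MvPowerSeries.order (∏ j ∈ Finset.range n, γ j) := hordprod n
      _ ≤ MvPowerSeries.order (∏ j ∈ Finset.range n, γ j) + MvPowerSeries.order g :=
          self_le_add_right _ _
      _ ≤ MvPowerSeries.order ((∏ j ∈ Finset.range n, γ j) * g) := MvPowerSeries.le_order_mul
      _ = MvPowerSeries.order f := by rw [← hg]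
  have htop : MvPowerSeries.order f = ⊤ := by
    by_contra hne
    have hcon := hordf ((MvPowerSeries.order f).toNat + 1)
    rw [← ENat.coe_toNat hne] at hcon
    have hcon2 : (MvPowerSeries.order f).toNat + 1 ≤ (MvPowerSeries.order f).toNat := by
      exact_mod_cast hcon
    omega
  exact hf0 (MvPowerSeries.order_eq_top_iff.mp htop)
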